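/- Let z ∈ ℂ with |z| < 1 and let p ≥ 1 be a natural number. Then ∫_{0<θ₁<θ₂<⋯<θ_p<2π} ∏_{i=1}^{p} g_z(θ_i) dθ₁⋯dθ_p = 1/p!, where g_z(θ) = (1/(4π))·(e^{iθ}·C(z, e^{iθ}) − e^{−iθ}·D(z, e^{iθ})) and the integral is over the open simplex of ordered p-tuples in (0,2π). (This is the weight integral ∫ ω(z,t₁)⋯ω(z,t_p) over cyclically ordered boundary points, used to evaluate the first Taylor component F₁ of the L∞-morphism of the main theorem: the integral is independent of z and equals its value 1/p! at z = 0, where ω(0,t) = (1/2π) d arg(t).) -/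

import Mathlib

open Complex MeasureTheory

/-- `C z w` is `4πi` times the coefficient of `dw` in the propagator 1-form `ω(z,w)`. -/
noncomputable def propC (z w : ℂ) : ℂ :=
  -(z - w)⁻¹ + (starRingEnd ℂ) z / (1 - (starRingEnd ℂ) z * w)

/-- `D z w` is `4πi` times the coefficient of `dw̄` in the propagator 1-form `ω(z,w)`. -/
noncomputable def propD (z w : ℂ) : ℂ :=
  ((starRingEnd ℂ) z - (starRingEnd ℂ) w)⁻¹ - z / (1 - z * (starRingEnd ℂ) w)

/-- `g z θ` is the coefficient of `dθ` in the pullback of `ω(z,·)` to the boundary circle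
parametrized by `w = e^{iθ}`. -/
noncomputable def gProp (z : ℂ) (θ : ℝ) : ℂ :=
  (1 / (4 * (Real.pi : ℂ))) *
    (Complex.exp (Complex.I * θ) * propC z (Complex.exp (Complex.I * θ)) -
      Complex.exp (-(Complex.I * θ)) * propD z (Complex.exp (Complex.I * θ)))

/-- The open simplex of ordered `p`-tuples of angles in `(0, 2π)`. -/
def cyclicSimplex (p : ℕ) : Set (Fin p → ℝ) :=
  {θ | (∀ i, θ i ∈ Set.Ioo (0 : ℝ) (2 * Real.pi)) ∧ ∀ i j : Fin p, i < j → θ i < θ j}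

variable {z : ℂ}


lemma norm_exp_I_mul (θ : ℝ) : ‖Complex.exp (Complex.I * θ)‖ = 1 := by
  rw [Complex.norm_exp]; simp

lemma conj_exp_I_mul (θ : ℝ) :
    (starRingEnd ℂ) (Complex.exp (Complex.I * θ)) = (Complex.exp (Complex.I * θ))⁻¹ := by
  rw [← Complex.exp_conj, ← Complex.exp_neg]
  congr 1
  simp [map_mul, Complex.conj_ofReal]

lemma exp_I_ne (hz : ‖z‖ < 1) (θ : ℝ) : Complex.exp (Complex.I * θ) - z ≠ 0 := by
  intro h
  rw [sub_eq_zero] at h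
  rw [← h] at hz
  simp [norm_exp_I_mul] at hz

lemma one_sub_conj_ne (hz : ‖z‖ < 1) (θ : ℝ) :
    1 - (starRingEnd ℂ) z * Complex.exp (Complex.I * θ) ≠ 0 := by
  intro h
  rw [sub_eq_zero] at h
  have : ‖(starRingEnd ℂ) z * Complex.exp (Complex.I * θ)‖ = 1 := by rw [← h]; simp
  rw [norm_mul, norm_exp_I_mul, mul_one, Complex.norm_conj] at this
  rw [this] at hz
  exact lt_irrefl _ hz

lemma gProp_eq (hz : ‖z‖ < 1) (θ : ℝ) :
    gProp z θ = (1 / (2 * (Real.pi : ℂ))) *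
      (1 + ((starRingEnd ℂ) z * Complex.exp (Complex.I * θ)) /
            (1 - (starRingEnd ℂ) z * Complex.exp (Complex.I * θ)) +
        z / (Complex.exp (Complex.I * θ) - z)) := by
  have hπ : (Real.pi : ℂ) ≠ 0 := by exact_mod_cast Real.pi_ne_zero
  set E := Complex.exp (Complex.I * θ) with hEdef
  have hE0 : E ≠ 0 := Complex.exp_ne_zero _
  have h1 : E - z ≠ 0 := exp_I_ne hz θ
  have h2 : 1 - (starRingEnd ℂ) z * E ≠ 0 := one_sub_conj_ne hz θ
  have h3 : z - E ≠ 0 := sub_ne_zero.2 fun h => h1 (sub_eq_zero.2 h.symm)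
  have h4 : (starRingEnd ℂ) z - (starRingEnd ℂ) E ≠ 0 := by
    rw [← map_sub]
    simp only [ne_eq, map_eq_zero]
    exact h3
  have h5 : 1 - z * (starRingEnd ℂ) E ≠ 0 := by
    rw [conj_exp_I_mul]
    intro h
    rw [sub_eq_zero] at h
    have : ‖z * E⁻¹‖ = 1 := by rw [← h]; simp
    rw [norm_mul, norm_inv, norm_exp_I_mul] at this
    simp only [inv_one, mul_one] at this
    rw [this] at hz
    exact lt_irrefl _ hz
  rw [gProp, propC, propD]
  rw [Complex.exp_neg, ← hEdef]
  rw [conj_exp_I_mul, ← hEdef] at h4 h5 ⊢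
  set w := (starRingEnd ℂ) z with hw
  clear_value w
  clear hw
  have t1 : E * -(z - E)⁻¹ = 1 + z / (E - z) := by
    field_simp [h1, h3]
    ring
  have t2 : E * (w / (1 - w * E)) = w * E / (1 - w * E) := by ring
  have h2' : -1 + w * E ≠ 0 := fun h => h2 (by linear_combination -h)
  have t3 : E⁻¹ * (w - E⁻¹)⁻¹ = -(1 / (1 - w * E)) := by
    rw [← mul_inv]
    have hh : E * (w - E⁻¹) = -(1 - w * E) := by
      rw [mul_sub, mul_inv_cancel₀ hE0]; ring
    rw [hh, ← neg_inv, one_div]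
  have t4 : E⁻¹ * (z / (1 - z * E⁻¹)) = z / (E - z) := by
    field_simp [hE0, h1, h5]
  have t5 : (1:ℂ) / (1 - w * E) = 1 + w * E / (1 - w * E) := by
    field_simp
    ring
  linear_combination (1 / (4 * (Real.pi:ℂ))) * (t1 + t2 - t3 + t4 + t5)

lemma continuous_expI : Continuous fun θ : ℝ => Complex.exp (Complex.I * θ) := by
  fun_prop

lemma continuous_gProp (hz : ‖z‖ < 1) : Continuous (gProp z) := by
  have : gProp z = fun θ : ℝ => (1 / (2 * (Real.pi : ℂ))) *
      (1 + ((starRingEnd ℂ) z * Complex.exp (Complex.I * θ)) /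
            (1 - (starRingEnd ℂ) z * Complex.exp (Complex.I * θ)) +
        z / (Complex.exp (Complex.I * θ) - z)) := funext fun θ => gProp_eq hz θ
  rw [this]
  apply continuous_const.mul
  apply Continuous.add
  · apply continuous_const.add
    exact (continuous_const.mul continuous_expI).div
      (continuous_const.sub (continuous_const.mul continuous_expI))
      fun θ => one_sub_conj_ne hz θ
  · exact continuous_const.div (continuous_expI.sub continuous_const)
      fun θ => exp_I_ne hz θ

noncomputable def primF (z : ℂ) (θ : ℝ) : ℂ :=
  (1 / (2 * (Real.pi : ℂ))) *
    (θ + Complex.I * Complex.log (1 - (starRingEnd ℂ) z * Complex.exp (Complex.I * θ))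
       - Complex.I * Complex.log (1 - z * Complex.exp (-(Complex.I * θ))))

lemma slit1 (hz : ‖z‖ < 1) (θ : ℝ) :
    1 - (starRingEnd ℂ) z * Complex.exp (Complex.I * θ) ∈ Complex.slitPlane := by
  rw [Complex.mem_slitPlane_iff]
  left
  have h : ‖(starRingEnd ℂ) z * Complex.exp (Complex.I * θ)‖ < 1 := by
    rw [norm_mul, norm_exp_I_mul, mul_one, Complex.norm_conj]
    exact hz
  have h2 : ((starRingEnd ℂ) z * Complex.exp (Complex.I * θ)).re < 1 :=
    lt_of_le_of_lt (le_trans (le_abs_self _) (Complex.abs_re_le_norm _)) h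
  simp only [Complex.sub_re, Complex.one_re]
  linarith

lemma slit2 (hz : ‖z‖ < 1) (θ : ℝ) :
    1 - z * Complex.exp (-(Complex.I * θ)) ∈ Complex.slitPlane := by
  rw [Complex.mem_slitPlane_iff]
  left
  have h : ‖z * Complex.exp (-(Complex.I * θ))‖ < 1 := by
    rw [norm_mul]
    have : ‖Complex.exp (-(Complex.I * θ))‖ = 1 := by
      rw [Complex.norm_exp]; simp
    rw [this, mul_one]
    exact hz
  have h2 : ((z * Complex.exp (-(Complex.I * θ)))).re < 1 :=
    lt_of_le_of_lt (le_trans (le_abs_self _) (Complex.abs_re_le_norm _)) h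
  simp only [Complex.sub_re, Complex.one_re]
  linarith

lemma hasDerivAt_primF (hz : ‖z‖ < 1) (θ : ℝ) :
    HasDerivAt (primF z) (gProp z θ) θ := by
  set E := Complex.exp (Complex.I * θ) with hEdef
  have hofReal : HasDerivAt (fun t : ℝ => (t : ℂ)) 1 θ := Complex.ofRealCLM.hasDerivAt
  have hE : HasDerivAt (fun t : ℝ => Complex.exp (Complex.I * t)) (Complex.I * E) θ := by
    have := ((hofReal.const_mul Complex.I).cexp)
    simpa [hEdef, mul_comm] using this
  have hE' : HasDerivAt (fun t : ℝ => Complex.exp (-(Complex.I * t)))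
      (-(Complex.I * Complex.exp (-(Complex.I * θ)))) θ := by
    have := ((hofReal.const_mul Complex.I).neg.cexp)
    simpa [mul_comm] using this
  have h1 : HasDerivAt (fun t : ℝ => 1 - (starRingEnd ℂ) z * Complex.exp (Complex.I * t))
      (-((starRingEnd ℂ) z * (Complex.I * E))) θ := (hE.const_mul _).const_sub 1
  have h2 : HasDerivAt (fun t : ℝ => 1 - z * Complex.exp (-(Complex.I * t)))
      (-(z * -(Complex.I * Complex.exp (-(Complex.I * θ))))) θ := (hE'.const_mul _).const_sub 1
  have hl1 := h1.clog_real (slit1 hz θ)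
  have hl2 := h2.clog_real (slit2 hz θ)
  have hcomb := ((hofReal.add (hl1.const_mul Complex.I)).sub
      (hl2.const_mul Complex.I)).const_mul (1 / (2 * (Real.pi : ℂ)))
  have : primF z = fun t : ℝ => (1 / (2 * (Real.pi : ℂ))) *
      ((t : ℂ) + Complex.I * Complex.log (1 - (starRingEnd ℂ) z * Complex.exp (Complex.I * t))
        - Complex.I * Complex.log (1 - z * Complex.exp (-(Complex.I * t)))) := rfl
  rw [this]
  refine hcomb.congr_deriv ?_
  symm
  rw [gProp_eq hz θ]
  have hE0 : E ≠ 0 := Complex.exp_ne_zero _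
  have hne1 : 1 - (starRingEnd ℂ) z * E ≠ 0 := one_sub_conj_ne hz θ
  have hne3 : E - z ≠ 0 := exp_I_ne hz θ
  rw [Complex.exp_neg, ← hEdef]
  have hne2 : 1 - z * E⁻¹ ≠ 0 := by
    intro h
    rw [sub_eq_zero] at h
    have : ‖z * E⁻¹‖ = 1 := by rw [← h]; simp
    rw [norm_mul, norm_inv, hEdef, norm_exp_I_mul] at this
    simp only [inv_one, mul_one] at this
    rw [this] at hz
    exact lt_irrefl _ hz
  clear_value E
  have t4' : z * E⁻¹ / (1 - z * E⁻¹) = z / (E - z) := by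
    rw [div_eq_div_iff hne2 hne3]
    field_simp
  linear_combination (1 / (2 * (Real.pi:ℂ))) *
      ((starRingEnd ℂ) z * E / (1 - (starRingEnd ℂ) z * E) + z * E⁻¹ / (1 - z * E⁻¹)) *
      Complex.I_mul_I - (1 / (2 * (Real.pi:ℂ))) * t4'

lemma integral_gProp (hz : ‖z‖ < 1) :
    ∫ θ in (0:ℝ)..(2 * Real.pi), gProp z θ = 1 := by
  rw [intervalIntegral.integral_eq_sub_of_hasDerivAt
    (fun θ _ => hasDerivAt_primF hz θ)
    ((continuous_gProp hz).intervalIntegrable 0 (2 * Real.pi))]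
  have he : Complex.exp (Complex.I * ((2 * Real.pi : ℝ) : ℂ)) = 1 := by
    push_cast
    rw [show Complex.I * (2 * (Real.pi : ℂ)) = 2 * Real.pi * Complex.I by ring]
    exact Complex.exp_two_pi_mul_I
  have he' : Complex.exp (-(Complex.I * ((2 * Real.pi : ℝ) : ℂ))) = 1 := by
    rw [Complex.exp_neg, he, inv_one]
  rw [primF, primF]
  push_cast at he he' ⊢
  rw [he, he']
  simp only [Complex.ofReal_zero, mul_zero, Complex.exp_zero, neg_zero, mul_one]
  have hπ : (Real.pi : ℂ) ≠ 0 := by exact_mod_cast Real.pi_ne_zero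
  field_simp
  ring

lemma integral_cube (hz : ‖z‖ < 1) (p : ℕ) :
    ∫ θ in Set.univ.pi (fun _ : Fin p => Set.Ioo (0:ℝ) (2 * Real.pi)),
      (∏ i : Fin p, gProp z (θ i)) = 1 := by
  have hmeas : MeasurableSet (Set.univ.pi (fun _ : Fin p => Set.Ioo (0:ℝ) (2 * Real.pi))) :=
    MeasurableSet.univ_pi fun _ => measurableSet_Ioo
  rw [← integral_indicator hmeas]
  have hind : ∀ θ : Fin p → ℝ,
      (Set.univ.pi (fun _ : Fin p => Set.Ioo (0:ℝ) (2 * Real.pi))).indicator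
        (fun θ => ∏ i : Fin p, gProp z (θ i)) θ =
      ∏ i : Fin p, (Set.Ioo (0:ℝ) (2 * Real.pi)).indicator (gProp z) (θ i) := by
    intro θ
    by_cases h : θ ∈ Set.univ.pi (fun _ : Fin p => Set.Ioo (0:ℝ) (2 * Real.pi))
    · rw [Set.indicator_of_mem h]
      rw [Set.mem_univ_pi] at h
      exact Finset.prod_congr rfl fun i _ => (Set.indicator_of_mem (h i) _).symm
    · rw [Set.indicator_of_notMem h]
      rw [Set.mem_univ_pi] at h
      push_neg at h
      obtain ⟨i, hi⟩ := h
      exact (Finset.prod_eq_zero (Finset.mem_univ i)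
        (Set.indicator_of_notMem hi _)).symm
  simp_rw [hind]
  rw [MeasureTheory.volume_pi, MeasureTheory.integral_fintype_prod_eq_pow (ι := Fin p)
    ((Set.Ioo (0:ℝ) (2 * Real.pi)).indicator (gProp z))]
  rw [integral_indicator measurableSet_Ioo, ← MeasureTheory.integral_Ioc_eq_integral_Ioo,
    ← intervalIntegral.integral_of_le (by positivity : (0:ℝ) ≤ 2 * Real.pi),
    integral_gProp hz, one_pow]



lemma measurableSet_cyclicSimplex (p : ℕ) : MeasurableSet (cyclicSimplex p) := by
  have : cyclicSimplex p =
      (⋂ i, (fun θ : Fin p → ℝ => θ i) ⁻¹' Set.Ioo (0:ℝ) (2 * Real.pi)) ∩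
      ⋂ i, ⋂ j, ⋂ (_ : i < j), {θ : Fin p → ℝ | θ i < θ j} := by
    ext θ
    simp [cyclicSimplex, Set.mem_iInter]
  rw [this]
  exact (MeasurableSet.iInter fun i =>
      (measurable_pi_apply i) measurableSet_Ioo).inter
    (MeasurableSet.iInter fun i => MeasurableSet.iInter fun j => MeasurableSet.iInter fun _ =>
      measurableSet_lt (measurable_pi_apply i) (measurable_pi_apply j))

lemma null_eq_coords (p : ℕ) (i j : Fin p) (hij : i ≠ j) :
    volume {θ : Fin p → ℝ | θ i = θ j} = 0 := by
  classical
  set L : (Fin p → ℝ) →ₗ[ℝ] ℝ :=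
    (LinearMap.proj i : (Fin p → ℝ) →ₗ[ℝ] ℝ) - (LinearMap.proj j : (Fin p → ℝ) →ₗ[ℝ] ℝ) with hL
  have hset : {θ : Fin p → ℝ | θ i = θ j} = (LinearMap.ker L : Set (Fin p → ℝ)) := by
    ext θ
    simp [hL, LinearMap.mem_ker, LinearMap.sub_apply, sub_eq_zero]
  rw [hset]
  apply MeasureTheory.Measure.addHaar_submodule
  intro htop
  have h1 : L (Pi.single i 1) = 0 := by
    rw [LinearMap.ker_eq_top] at htop
    rw [htop]; rfl
  rw [hL] at h1
  simp only [LinearMap.sub_apply, LinearMap.proj_apply, Pi.single_eq_same,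
    Pi.single_eq_of_ne hij.symm, sub_zero] at h1
  exact one_ne_zero h1

/-- The weight integral `∫ ω(z,t₁)⋯ω(z,t_p)` over cyclically ordered boundary points
equals `1/p!`, independently of the interior point `z`. -/
theorem propagator_simplex_integral (z : ℂ) (hz : ‖z‖ < 1) (p : ℕ) (hp : 1 ≤ p) :
    ∫ θ in cyclicSimplex p, (∏ i : Fin p, gProp z (θ i)) =
      (1 : ℂ) / (Nat.factorial p) := by
  classical
  set F : (Fin p → ℝ) → ℂ := fun θ => ∏ i : Fin p, gProp z (θ i) with hF
  set Q : Set (Fin p → ℝ) := Set.univ.pi (fun _ : Fin p => Set.Ioo (0:ℝ) (2 * Real.pi))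
    with hQ
  set A : Equiv.Perm (Fin p) → Set (Fin p → ℝ) :=
    fun σ => {θ | (θ ∘ σ) ∈ cyclicSimplex p} with hA
  have hAmeas : ∀ σ, MeasurableSet (A σ) := by
    intro σ
    have : A σ = (fun θ : Fin p → ℝ => θ ∘ σ) ⁻¹' cyclicSimplex p := rfl
    rw [this]
    exact (measurable_pi_lambda _ fun i => measurable_pi_apply (σ i))
      (measurableSet_cyclicSimplex p)
  have hAsubQ : ∀ σ, A σ ⊆ Q := by
    intro σ θ hθ
    rw [hQ, Set.mem_univ_pi]
    intro i
    have := hθ.1 (σ.symm i)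
    simpa using this
  have hFc : Continuous F :=
    continuous_finset_prod _ fun i _ => (continuous_gProp hz).comp (continuous_apply i)
  have hFint : IntegrableOn F Q volume := by
    have hK : IsCompact (Set.univ.pi (fun _ : Fin p => Set.Icc (0:ℝ) (2 * Real.pi))) :=
      isCompact_univ_pi fun _ => isCompact_Icc
    exact (hFc.continuousOn.integrableOn_compact hK).mono_set
      (Set.pi_mono fun i _ => Set.Ioo_subset_Icc_self)
  have key : ∀ σ : Equiv.Perm (Fin p), ∫ θ in A σ, F θ = ∫ θ in cyclicSimplex p, F θ := by
    intro σ
    have hT := MeasureTheory.volume_measurePreserving_piCongrLeft (fun _ : Fin p => ℝ)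
      (σ.symm : Fin p ≃ Fin p)
    set T := MeasurableEquiv.piCongrLeft (fun _ : Fin p => ℝ) (σ.symm : Fin p ≃ Fin p)
      with hTdef
    have hTapp : ∀ g : Fin p → ℝ, T g = g ∘ σ := by
      intro g
      funext i
      have h1 := Equiv.piCongrLeft_apply_apply (fun _ : Fin p => ℝ)
        (σ.symm : Fin p ≃ Fin p) g (σ i)
      simp only [Equiv.symm_apply_apply] at h1
      simpa [hTdef, MeasurableEquiv.coe_piCongrLeft] using h1
    have hpre : A σ = ⇑T ⁻¹' cyclicSimplex p := by
      ext θ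
      simp [hA, Set.mem_preimage, hTapp θ]
    have hint := hT.setIntegral_preimage_emb (MeasurableEquiv.measurableEmbedding T) F
      (cyclicSimplex p)
    have hFT : ∀ x : Fin p → ℝ, F (T x) = F x := by
      intro x
      rw [hTapp, hF]
      exact Equiv.prod_comp σ fun t => gProp z (x t)
    calc ∫ θ in A σ, F θ = ∫ θ in ⇑T ⁻¹' cyclicSimplex p, F (T θ) := by
          rw [hpre]
          exact setIntegral_congr_fun (hpre ▸ hAmeas σ) fun x _ => (hFT x).symm
      _ = ∫ θ in cyclicSimplex p, F θ := hint
  have hdisj : Pairwise (Function.onFun Disjoint A) := by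
    intro σ τ hne
    rw [Function.onFun, Set.disjoint_left]
    intro θ hσ hτ
    have hgs : StrictMono (θ ∘ σ) := fun i j hij => hσ.2 i j hij
    have hgt : StrictMono (θ ∘ τ) := fun i j hij => hτ.2 i j hij
    have hinj : Function.Injective θ := by
      intro a b hab
      have h1 : (θ ∘ σ) (σ.symm a) = (θ ∘ σ) (σ.symm b) := by
        simp only [Function.comp_apply, Equiv.apply_symm_apply]
        exact hab
      have := hgs.injective h1
      simpa using congrArg σ this
    have hrange : Set.range (θ ∘ σ) = Set.range (θ ∘ τ) := by
      rw [Set.range_comp, Set.range_comp, Equiv.range_eq_univ, Equiv.range_eq_univ]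
    haveI : WellFoundedLT (Fin p) := Finite.to_wellFoundedLT
    have heq : (θ ∘ σ) = (θ ∘ τ) := (hgs.range_inj hgt).mp hrange
    exact hne (Equiv.ext fun i => hinj (congrFun heq i))
  have hcover : Q \ (⋃ σ, A σ) ⊆
      ⋃ (i : Fin p), ⋃ (j : Fin p), ⋃ (_ : i ≠ j), {θ : Fin p → ℝ | θ i = θ j} := by
    rintro θ ⟨hθQ, hθn⟩
    by_contra hc
    have hinj : Function.Injective θ := by
      intro a b hab
      by_contra hne
      exact hc (Set.mem_iUnion.2 ⟨a, Set.mem_iUnion.2 ⟨b, Set.mem_iUnion.2 ⟨hne, hab⟩⟩⟩)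
    apply hθn
    rw [Set.mem_iUnion]
    refine ⟨Tuple.sort θ, ?_, ?_⟩
    · intro i
      exact (Set.mem_univ_pi.mp hθQ) (Tuple.sort θ i)
    · intro i j hij
      have hsm : StrictMono (θ ∘ Tuple.sort θ) :=
        (Tuple.monotone_sort θ).strictMono_of_injective
          (hinj.comp (Tuple.sort θ).injective)
      exact hsm hij
  have hnull : volume (Q \ ⋃ σ, A σ) = 0 :=
    measure_mono_null hcover
      (measure_iUnion_null fun i => measure_iUnion_null fun j =>
        measure_iUnion_null fun hij => null_eq_coords p i j hij)
  have haeeq : (⋃ σ, A σ : Set (Fin p → ℝ)) =ᵐ[volume] Q := by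
    rw [MeasureTheory.ae_eq_set]
    constructor
    · rw [Set.diff_eq_empty.mpr (Set.iUnion_subset hAsubQ)]
      exact measure_empty
    · exact hnull
  have hsum : ∫ θ in ⋃ σ, A σ, F θ = ∑ σ : Equiv.Perm (Fin p), ∫ θ in A σ, F θ :=
    integral_iUnion_fintype hAmeas hdisj fun σ => hFint.mono_set (hAsubQ σ)
  have hQint : ∫ θ in Q, F θ = 1 := integral_cube hz p
  have hmain : (p.factorial : ℂ) * ∫ θ in cyclicSimplex p, F θ = 1 := by
    have h1 : ∫ θ in ⋃ σ, A σ, F θ = 1 := by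
      rw [setIntegral_congr_set haeeq, hQint]
    rw [hsum] at h1
    rw [Finset.sum_congr rfl fun σ _ => key σ, Finset.sum_const] at h1
    simp only [Finset.card_univ, Fintype.card_perm, Fintype.card_fin] at h1
    rw [← h1, nsmul_eq_mul]
  rw [eq_div_iff (by exact_mod_cast Nat.factorial_ne_zero p : (p.factorial : ℂ) ≠ 0)]
  rw [mul_comm]
  exact hmain
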